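/- arXiv:1104.2963 — 3 statements merged into one kernel-verified Lean document; each statement's English description precedes it below -/
import Mathlib

section
/- If f belongs to the Grand Lebesgue space Gψ with support (a,b), and an operator U satisfies the moment inequality |U f|_{q(p)} ≤ K(p)|f|_p for all p in (a,b) with q: (a,b) → (c,d) a continuous strictly monotone bijection with inverse r, then defining ψ₁(q) := K(r(q))·ψ(r(q)), one has ||U f||_{Gψ₁} ≤ ||f||_{Gψ}. -/
open MeasureTheory Set ENNReal

/-- Grand Lebesgue norm: `sup_{p ∈ s} |f|_p / ψ(p)`. -/
noncomputable def GLnorm {α : Type*} [MeasurableSpace α] (μ : Measure α)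
    (s : Set ℝ) (ψ : ℝ → ℝ) (f : α → ℝ) : ℝ≥0∞ :=
  ⨆ p ∈ s, eLpNorm f (ENNReal.ofReal p) μ / ENNReal.ofReal (ψ p)

theorem stmt0
    {X Y : Type*} [MeasurableSpace X] [MeasurableSpace Y]
    (μ : Measure X) (ν : Measure Y) [SigmaFinite μ] [SigmaFinite ν]
    (a b c d : ℝ) (hab : 1 ≤ a) (hab' : a < b) (hcd : 1 ≤ c) (hcd' : c < d)
    (U : (X → ℝ) → (Y → ℝ))
    (q r K ψ : ℝ → ℝ)
    -- ψ ∈ Ψ(a,b): continuous, positive, bounded away from zero on (a,b)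
    (hψcont : ContinuousOn ψ (Ioo a b))
    (hψpos : ∃ ε > (0:ℝ), ∀ p ∈ Ioo a b, ε ≤ ψ p)
    -- q : (a,b) → (c,d) continuous, strictly monotone bijection with inverse r
    (hqcont : ContinuousOn q (Ioo a b))
    (hqmono : StrictMonoOn q (Ioo a b))
    (hqmaps : ∀ p ∈ Ioo a b, q p ∈ Ioo c d)
    (hrmaps : ∀ s ∈ Ioo c d, r s ∈ Ioo a b)
    (hrq : ∀ p ∈ Ioo a b, r (q p) = p)
    (hqr : ∀ s ∈ Ioo c d, q (r s) = s)
    -- K finite (real-valued) and the moment inequality (A)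
    (hK : ∀ p ∈ Ioo a b, 0 < K p)
    (f : X → ℝ)
    (hA : ∀ p ∈ Ioo a b,
      eLpNorm (U f) (ENNReal.ofReal (q p)) ν
        ≤ ENNReal.ofReal (K p) * eLpNorm f (ENNReal.ofReal p) μ) :
    GLnorm ν (Ioo c d) (fun s => K (r s) * ψ (r s)) (U f)
      ≤ GLnorm μ (Ioo a b) ψ f := by
  apply iSup₂_le
  intro s hs
  have hp : r s ∈ Ioo a b := hrmaps s hs
  have hKp := hK _ hp
  have hA' := hA _ hp
  rw [hqr s hs] at hA'
  calc eLpNorm (U f) (ENNReal.ofReal s) ν / ENNReal.ofReal (K (r s) * ψ (r s))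
      ≤ (ENNReal.ofReal (K (r s)) * eLpNorm f (ENNReal.ofReal (r s)) μ) /
        (ENNReal.ofReal (K (r s)) * ENNReal.ofReal (ψ (r s))) := by
        rw [← ENNReal.ofReal_mul hKp.le]
        exact ENNReal.div_le_div_right hA' _
    _ = eLpNorm f (ENNReal.ofReal (r s)) μ / ENNReal.ofReal (ψ (r s)) := by
        rw [ENNReal.mul_div_mul_left _ _ (by simp [hKp]) ENNReal.ofReal_ne_top]
    _ ≤ GLnorm μ (Ioo a b) ψ f := by exact le_biSup (fun p => eLpNorm f (ENNReal.ofReal p) μ / ENNReal.ofReal (ψ p)) hp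
end

section
/- Let f₀(x) = I_D(x)/∏_{j=1}^n |x_j| where D = {x ∈ R^n : |x_j| ≥ 1 and c₁ ≤ |x_j|/|x| ≤ c₂ for all j}, with 0 < c₁ < 1 < c₂. Then for p > n/(n-β) with 0 ≤ β < n, one has ‖ |x|^β f₀ ‖_{L^p} ≤ C(n,β)·(p - n/(n-β))^{-1/p} < ∞. -/
open MeasureTheory Set ENNReal Finset

lemma coord_le_norm {n : ℕ} (x : EuclideanSpace ℝ (Fin n)) (j : Fin n) : |x j| ≤ ‖x‖ := by
  rw [EuclideanSpace.norm_eq]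
  have h : |x j| = Real.sqrt (‖x j‖ ^ 2) := by
    rw [Real.sqrt_sq_eq_abs, Real.norm_eq_abs, abs_abs]
  rw [h]
  apply Real.sqrt_le_sqrt
  exact Finset.single_le_sum (f := fun i => ‖x i‖ ^ 2) (fun i _ => by positivity) (Finset.mem_univ j)

theorem stmt9 (n : ℕ) (hn : 0 < n) (β : ℝ) (hβ0 : 0 ≤ β) (hβn : β < n)
    (c₁ c₂ : ℝ) (hc₁ : 0 < c₁) (hc₁1 : c₁ < 1) (hc₂ : 1 < c₂) :
    ∃ C > (0:ℝ), ∀ p : ℝ, n / (n - β) < p →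
      eLpNorm (fun x : EuclideanSpace ℝ (Fin n) => ‖x‖ ^ β *
          ({x : EuclideanSpace ℝ (Fin n) | ∀ j : Fin n,
              1 ≤ |x j| ∧ c₁ ≤ |x j| / ‖x‖ ∧ |x j| / ‖x‖ ≤ c₂}.indicator
            (fun x => (∏ j : Fin n, |x j|)⁻¹) x))
        (ENNReal.ofReal p) volume
      ≤ ENNReal.ofReal (C * (p - n / (n - β)) ^ (-(1/p))) := by
  haveI : Nonempty (Fin n) := Fin.pos_iff_nonempty.mp hn
  set E := EuclideanSpace ℝ (Fin n)
  have hnb : (0:ℝ) < (n:ℝ) - β := by linarith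
  set q : ℝ := (n:ℝ) / ((n:ℝ) - β) with hq
  set V : ℝ := (volume (Metric.ball (0:E) 1)).toReal with hV
  have hV0 : 0 ≤ V := ENNReal.toReal_nonneg
  set M : ℝ := n * V / ((n:ℝ) - β) with hM
  have hM0 : 0 ≤ M := by positivity
  set g : ℝ → ℝ := fun r => c₁ ^ (-(n:ℝ)) * Set.indicator (Ici (1:ℝ)) (fun r => r ^ (β - n)) r
    with hg
  have hg0 : ∀ r, 0 ≤ g r := by
    intro r
    apply mul_nonneg (Real.rpow_nonneg hc₁.le _)
    apply Set.indicator_nonneg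
    intro r hr; exact Real.rpow_nonneg (le_trans zero_le_one hr) _
  refine ⟨c₁ ^ (-(n:ℝ)) * (1 + M), by positivity, fun p hp => ?_⟩
  have hq1 : (1:ℝ) ≤ q := by
    rw [hq, le_div_iff₀ hnb]; linarith
  have hp1 : (1:ℝ) < p := lt_of_le_of_lt hq1 hp
  have hp0 : (0:ℝ) < p := by linarith
  have hpq : 0 < p - q := by linarith
  -- step 1: pointwise bound
  have hpt : ∀ x : E, ‖(‖x‖ ^ β *
      ({x : E | ∀ j : Fin n, 1 ≤ |x j| ∧ c₁ ≤ |x j| / ‖x‖ ∧ |x j| / ‖x‖ ≤ c₂}.indicator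
        (fun x => (∏ j : Fin n, |x j|)⁻¹) x))‖ ≤ ‖g ‖x‖‖ := by
    intro x
    by_cases hx : x ∈ {x : E | ∀ j : Fin n, 1 ≤ |x j| ∧ c₁ ≤ |x j| / ‖x‖ ∧ |x j| / ‖x‖ ≤ c₂}
    · have hx1 : 1 ≤ ‖x‖ := le_trans (hx ⟨0, hn⟩).1 (coord_le_norm x _)
      have hx0 : (0:ℝ) < ‖x‖ := lt_of_lt_of_le one_pos hx1
      have hprodpos : (0:ℝ) < ∏ j : Fin n, |x j| :=
        Finset.prod_pos fun j _ => lt_of_lt_of_le one_pos (hx j).1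
      have hFnn : 0 ≤ ‖x‖ ^ β * (∏ j : Fin n, |x j|)⁻¹ := by positivity
      rw [Set.indicator_of_mem hx, Real.norm_of_nonneg hFnn, Real.norm_of_nonneg (hg0 _), hg]
      simp only []
      rw [Set.indicator_of_mem (show ‖x‖ ∈ Ici (1:ℝ) from hx1)]
      have hprod : (c₁ * ‖x‖) ^ n ≤ ∏ j : Fin n, |x j| := by
        calc (c₁ * ‖x‖) ^ n = ∏ _j : Fin n, (c₁ * ‖x‖) := by
              rw [Finset.prod_const, Finset.card_univ, Fintype.card_fin]
          _ ≤ ∏ j : Fin n, |x j| := Finset.prod_le_prod (fun j _ => by positivity)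
              (fun j _ => by
                have h := (hx j).2.1
                rwa [le_div_iff₀ hx0] at h)
      have h2 : (∏ j : Fin n, |x j|)⁻¹ ≤ ((c₁ * ‖x‖) ^ n)⁻¹ := by
        apply inv_anti₀ (by positivity) hprod
      have heq : c₁ ^ (-(n:ℝ)) * ‖x‖ ^ (β - (n:ℝ)) = ‖x‖ ^ β * ((c₁ * ‖x‖) ^ n)⁻¹ := by
        rw [Real.rpow_neg hc₁.le, Real.rpow_sub hx0, Real.rpow_natCast, Real.rpow_natCast,
          mul_pow]
        field_simp
      rw [heq]
      exact mul_le_mul_of_nonneg_left h2 (Real.rpow_nonneg (norm_nonneg x) _)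
    · rw [Set.indicator_of_notMem hx, mul_zero, norm_zero]
      exact norm_nonneg _
  have step1 := eLpNorm_mono (μ := volume) (p := ENNReal.ofReal p) hpt
  -- the radial p-th power function
  set f : ℝ → ℝ := fun r => (g r) ^ p with hf
  have hfnn : ∀ r, 0 ≤ f r := fun r => Real.rpow_nonneg (hg0 r) _
  -- integrability
  have hgm : Measurable g := by
    apply Measurable.const_mul
    exact Measurable.indicator (measurable_id.pow_const _) measurableSet_Ici
  have hmeas : Measurable fun x : E => f ‖x‖ := by
    have hfm : Measurable f := hgm.pow_const _
    exact hfm.comp measurable_norm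
  have hint : Integrable (fun x : E => f ‖x‖) volume := by
    set s : ℝ := ((n:ℝ) - β) * p with hs
    have hs0 : 0 < s := by positivity
    have key : ((n:ℝ) - β) * q = n := by
      rw [hq]; field_simp
    have hns : (n:ℝ) < s := by
      have h := (mul_lt_mul_iff_right₀ hnb).mpr hp
      rwa [key] at h
    have hfr : (Module.finrank ℝ E : ℝ) < s := by
      rw [show Module.finrank ℝ E = n from finrank_euclideanSpace_fin]; exact hns
    have hbig := (integrable_one_add_norm (E := E) (μ := volume) hfr).const_mul
      ((c₁ ^ (-(n:ℝ))) ^ p * 2 ^ s)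
    apply hbig.mono' hmeas.aestronglyMeasurable
    filter_upwards with x
    rw [Real.norm_of_nonneg (hfnn _)]
    by_cases h1 : (1:ℝ) ≤ ‖x‖
    · have hx0 : (0:ℝ) < ‖x‖ := lt_of_lt_of_le one_pos h1
      have hfx : f ‖x‖ = (c₁ ^ (-(n:ℝ))) ^ p * ‖x‖ ^ (-s) := by
        rw [hf]
        simp only []
        rw [hg]
        simp only []
        rw [Set.indicator_of_mem (show ‖x‖ ∈ Ici (1:ℝ) from h1),
          Real.mul_rpow (Real.rpow_nonneg hc₁.le _) (Real.rpow_nonneg (norm_nonneg _) _),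
          ← Real.rpow_mul (norm_nonneg _)]
        congr 2
        rw [hs]; ring
      rw [hfx, mul_assoc]
      apply mul_le_mul_of_nonneg_left _ (Real.rpow_nonneg (Real.rpow_nonneg hc₁.le _) _)
      -- ‖x‖ ^ (-s) ≤ 2 ^ s * (1 + ‖x‖) ^ (-s)
      have h2 : (1 + ‖x‖) ^ (-s) ≥ (2 * ‖x‖) ^ (-s) := by
        apply Real.rpow_le_rpow_of_nonpos (by positivity) (by linarith) (by linarith)
      calc ‖x‖ ^ (-s) = 2 ^ s * (2 * ‖x‖) ^ (-s) := by
            rw [Real.mul_rpow (by norm_num) (norm_nonneg _), ← mul_assoc,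
              ← Real.rpow_add two_pos, add_neg_cancel, Real.rpow_zero, one_mul]
        _ ≤ 2 ^ s * (1 + ‖x‖) ^ (-s) := by
            exact mul_le_mul_of_nonneg_left h2 (Real.rpow_nonneg (by norm_num) _)
    · have hfx : f ‖x‖ = 0 := by
        rw [hf]
        simp only []
        rw [hg]
        simp only []
        rw [Set.indicator_of_notMem (show ‖x‖ ∉ Ici (1:ℝ) from h1), mul_zero,
          Real.zero_rpow hp0.ne']
      rw [hfx]
      positivity
  -- value of integral
  have hval : ∫ x : E, f ‖x‖ = c₁ ^ (-(n:ℝ) * p) * (n * V) * (((n:ℝ) - β) * (p - q))⁻¹ := by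
    haveI : Nontrivial E := by
      apply Module.nontrivial_of_finrank_pos (R := ℝ)
      rw [finrank_euclideanSpace_fin]; exact hn
    have key : ((n:ℝ) - β) * q = n := by rw [hq]; field_simp
    have hdim : Module.finrank ℝ E = n := finrank_euclideanSpace_fin
    rw [MeasureTheory.integral_fun_norm_addHaar (volume : Measure E) f, hdim]
    have hrad : ∫ y in Ioi (0:ℝ), y ^ (n - 1) • f y
        = c₁ ^ (-(n:ℝ) * p) * (((n:ℝ) - β) * (p - q))⁻¹ := by
      have hcong : ∀ y ∈ Ioi (0:ℝ), y ^ (n - 1) • f y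
          = Set.indicator (Ici (1:ℝ))
              (fun y => c₁ ^ (-(n:ℝ) * p) * y ^ ((n:ℝ) - 1 + (β - n) * p)) y := by
        intro y hy
        have hy0 : (0:ℝ) < y := hy
        by_cases h1 : (1:ℝ) ≤ y
        · rw [Set.indicator_of_mem (show y ∈ Ici (1:ℝ) from h1), smul_eq_mul]
          have hfy : f y = c₁ ^ (-(n:ℝ) * p) * y ^ ((β - n) * p) := by
            rw [hf]; simp only []
            rw [hg]; simp only []
            rw [Set.indicator_of_mem (show y ∈ Ici (1:ℝ) from h1),
              Real.mul_rpow (Real.rpow_nonneg hc₁.le _) (Real.rpow_nonneg hy0.le _),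
              ← Real.rpow_mul hc₁.le, ← Real.rpow_mul hy0.le]
          rw [hfy, ← mul_assoc, mul_comm (y ^ (n-1)) (c₁ ^ (-(n:ℝ) * p)), mul_assoc]
          congr 1
          rw [← Real.rpow_natCast y (n-1), ← Real.rpow_add hy0]
          congr 1
          rw [Nat.cast_sub hn, Nat.cast_one]
        · rw [Set.indicator_of_notMem (show y ∉ Ici (1:ℝ) from h1)]
          have hfy : f y = 0 := by
            rw [hf]; simp only []
            rw [hg]; simp only []
            rw [Set.indicator_of_notMem (show y ∉ Ici (1:ℝ) from h1), mul_zero,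
              Real.zero_rpow hp0.ne']
          rw [hfy, smul_zero]
      rw [MeasureTheory.setIntegral_congr_fun measurableSet_Ioi hcong,
        MeasureTheory.setIntegral_indicator measurableSet_Ici,
        show Set.Ioi (0:ℝ) ∩ Set.Ici 1 = Set.Ici 1 from
          Set.inter_eq_self_of_subset_right (fun y hy => Set.mem_Ioi.mpr (lt_of_lt_of_le one_pos hy)),
        MeasureTheory.integral_Ici_eq_integral_Ioi, MeasureTheory.integral_const_mul]
      have ha : (n:ℝ) - 1 + (β - n) * p < -1 := by
        have h2 : ((n:ℝ) - β) * q < ((n:ℝ) - β) * p := (mul_lt_mul_iff_right₀ hnb).mpr hp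
        rw [key] at h2
        nlinarith
      rw [integral_Ioi_rpow_of_lt ha one_pos, Real.one_rpow]
      congr 1
      have ha1 : (n:ℝ) - 1 + (β - n) * p + 1 = -(((n:ℝ) - β) * (p - q)) := by
        rw [mul_sub, key]; ring
      rw [ha1]
      rw [div_neg, neg_div, neg_neg, one_div]
    rw [hrad, nsmul_eq_mul, smul_eq_mul]
    rw [measureReal_def, ← hV]
    ring
  -- eLpNorm of g∘norm
  have step2 : eLpNorm (fun x : E => g ‖x‖) (ENNReal.ofReal p) volume
      = ENNReal.ofReal ((c₁ ^ (-(n:ℝ) * p) * (n * V) * (((n:ℝ) - β) * (p - q))⁻¹) ^ (1/p)) := by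
    rw [eLpNorm_eq_lintegral_rpow_enorm_toReal (ENNReal.ofReal_pos.mpr hp0).ne' ENNReal.ofReal_ne_top,
      ENNReal.toReal_ofReal hp0.le]
    have : ∀ x : E, (‖g ‖x‖‖ₑ) ^ p = ENNReal.ofReal (f ‖x‖) := by
      intro x
      rw [hf]
      rw [← ENNReal.ofReal_rpow_of_nonneg (hg0 _) hp0.le, Real.enorm_eq_ofReal (hg0 _)]
    simp_rw [this]
    rw [← ofReal_integral_eq_lintegral_ofReal hint (Filter.Eventually.of_forall fun x => hfnn _),
      hval, ← ENNReal.ofReal_rpow_of_nonneg (by positivity) (by positivity)]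
  -- final bound
  have step3 : (c₁ ^ (-(n:ℝ) * p) * (n * V) * (((n:ℝ) - β) * (p - q))⁻¹) ^ (1/p)
      ≤ (c₁ ^ (-(n:ℝ)) * (1 + M)) * (p - q) ^ (-(1/p)) := by
    have hKey : c₁ ^ (-(n:ℝ) * p) * (n * V) * (((n:ℝ) - β) * (p - q))⁻¹
        = c₁ ^ (-(n:ℝ) * p) * (M * (p - q)⁻¹) := by
      rw [hM, mul_inv]
      field_simp
    have hexp : (-(n:ℝ) * p) * (1/p) = -(n:ℝ) := by field_simp
    have e1 : (c₁ ^ (-(n:ℝ) * p) * (n * V) * (((n:ℝ) - β) * (p - q))⁻¹) ^ (1/p)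
        = c₁ ^ (-(n:ℝ)) * (M ^ (1/p) * (p - q) ^ (-(1/p))) := by
      rw [hKey, Real.mul_rpow (Real.rpow_nonneg hc₁.le _) (by positivity),
        Real.mul_rpow hM0 (by positivity), ← Real.rpow_mul hc₁.le, hexp,
        Real.inv_rpow hpq.le, ← Real.rpow_neg hpq.le]
    rw [e1]
    have hMle : M ^ (1/p) ≤ 1 + M := by
      rcases le_total M 1 with h | h
      · calc M ^ (1/p) ≤ 1 := Real.rpow_le_one hM0 h (by positivity)
          _ ≤ 1 + M := by linarith
      · calc M ^ (1/p) ≤ M ^ (1:ℝ) :=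
              Real.rpow_le_rpow_of_exponent_le h (by rw [div_le_one hp0]; exact hp1.le)
          _ = M := Real.rpow_one M
          _ ≤ 1 + M := by linarith
    rw [← mul_assoc]
    apply mul_le_mul_of_nonneg_right _ (Real.rpow_nonneg hpq.le _)
    exact mul_le_mul_of_nonneg_left hMle (Real.rpow_nonneg hc₁.le _)
  calc _ ≤ _ := step1
    _ = _ := step2
    _ ≤ _ := ENNReal.ofReal_le_ofReal step3
end

section
/- Suppose the Pitt–Beckner–Okikiolu condition β - α = n - n(1/p + 1/q) holds with 0 ≤ α, β < 1, α + β ≤ 1, p > p₀ := n/(n-β), 1 ≤ q < n/α. Then the best constant K(p) in the inequality ‖|y|^{-α} F[f]‖_q ≤ K(p)·‖|x|^β f‖_p over nonzero f ∈ L^p satisfies K(p) ≥ C(α,β,n)·(p/(p-p₀))^{(α+β)/n}. -/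
open MeasureTheory Set ENNReal Complex Metric

set_option maxHeartbeats 1000000

/-- The Fourier transform `F[f](y) = (2π)^{-n/2} ∫ e^{i x·y} f(x) dx` on `ℝ^n`. -/
noncomputable def Four (n : ℕ) (f : EuclideanSpace ℝ (Fin n) → ℂ)
    (y : EuclideanSpace ℝ (Fin n)) : ℂ :=
  ((2 * Real.pi) ^ (-(n:ℝ)/2) : ℝ) •
    ∫ x, Complex.exp (Complex.I * ((inner ℝ x y : ℝ) : ℂ)) • f x

noncomputable def bvol (n : ℕ) : ℝ := (volume (ball (0:EuclideanSpace ℝ (Fin n)) 1)).toReal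

lemma bvol_pos (n : ℕ) : 0 < bvol n := by
  apply ENNReal.toReal_pos
  · exact (Metric.measure_ball_pos volume 0 one_pos).ne'
  · exact measure_ball_lt_top.ne

lemma cover_ball (x : EuclideanSpace ℝ (Fin n)) (hx0 : x ≠ 0) (hx1 : ‖x‖ < 1) :
    ∃ k : ℕ, x ∈ closedBall (0:EuclideanSpace ℝ (Fin n)) ((2:ℝ)⁻¹ ^ k) \
      ball 0 ((2:ℝ)⁻¹ ^ (k+1)) := by
  classical
  have hn : 0 < ‖x‖ := norm_pos_iff.2 hx0
  have h2 : (2:ℝ)⁻¹ < 1 := by norm_num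
  obtain ⟨m, hm⟩ := exists_pow_lt_of_lt_one hn h2
  have hex : ∃ m, (2:ℝ)⁻¹ ^ m < ‖x‖ := ⟨m, hm⟩
  have hm0 : Nat.find hex ≠ 0 := by
    intro h
    have := Nat.find_spec hex
    rw [h] at this; simp at this; linarith
  set M := Nat.find hex with hM
  refine ⟨M - 1, ?_, ?_⟩
  · have := Nat.find_min hex (m := M - 1)
      (Nat.sub_lt (Nat.pos_of_ne_zero hm0) one_pos)
    simp only [mem_closedBall, dist_zero_right]
    linarith [not_lt.mp this]
  · have := Nat.find_spec hex
    simp only [mem_ball, dist_zero_right, not_lt]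
    rw [Nat.sub_add_cancel (Nat.pos_of_ne_zero hm0)]
    exact this.le

lemma finite_lint (n : ℕ) (hn : 0 < n) {u : ℝ} (hu : -(n:ℝ) < u) :
    ∫⁻ x in ball (0:EuclideanSpace ℝ (Fin n)) 1, ENNReal.ofReal (‖x‖ ^ u) ∂volume < ⊤ := by
  haveI : Nontrivial (EuclideanSpace ℝ (Fin n)) :=
    Module.nontrivial_of_finrank_pos (R := ℝ)
      (by rw [finrank_euclideanSpace, Fintype.card_fin]; exact hn)
  set E := EuclideanSpace ℝ (Fin n)
  set A : ℕ → Set E := fun k => closedBall (0:E) ((2:ℝ)⁻¹ ^ k) \ ball 0 ((2:ℝ)⁻¹ ^ (k+1)) with hA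
  have hun : 0 < u + n := by linarith
  have hsub : ball (0:E) 1 \ {0} ⊆ ⋃ k, A k := by
    intro x hx
    obtain ⟨k, hk⟩ := cover_ball x hx.2 (by simpa using hx.1)
    exact mem_iUnion.2 ⟨k, hk⟩
  have key : ∀ k, ∫⁻ x in A k, ENNReal.ofReal (‖x‖ ^ u) ∂volume ≤
      ENNReal.ofReal ((2:ℝ) ^ (n:ℝ)) * volume (ball (0:E) 1) *
        (ENNReal.ofReal ((2:ℝ) ^ (-(u + n)))) ^ k := by
    intro k
    have hbd : ∀ x ∈ A k, ENNReal.ofReal (‖x‖ ^ u) ≤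
        ENNReal.ofReal (((2:ℝ)⁻¹ ^ k) ^ (u + n) * ((2:ℝ)⁻¹ ^ (k+1)) ^ (-(n:ℝ))) := by
      intro x hx
      apply ENNReal.ofReal_le_ofReal
      have h1 : ‖x‖ ≤ (2:ℝ)⁻¹ ^ k := by simpa [A, dist_zero_right] using hx.1
      have h2 : (2:ℝ)⁻¹ ^ (k+1) ≤ ‖x‖ := by
        have := hx.2; simp only [A, mem_ball, dist_zero_right, not_lt] at this; exact this
      have hxpos : (0:ℝ) < ‖x‖ := lt_of_lt_of_le (by positivity) h2
      have : ‖x‖ ^ u = ‖x‖ ^ (u + n) * ‖x‖ ^ (-(n:ℝ)) := by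
        rw [← Real.rpow_add hxpos]; ring_nf
      rw [this]
      apply mul_le_mul
      · exact Real.rpow_le_rpow hxpos.le h1 hun.le
      · exact Real.rpow_le_rpow_of_nonpos (by positivity) h2 (by simp)
      · positivity
      · positivity
    calc ∫⁻ x in A k, ENNReal.ofReal (‖x‖ ^ u) ∂volume
        ≤ ∫⁻ _ in A k, ENNReal.ofReal (((2:ℝ)⁻¹ ^ k) ^ (u + n) * ((2:ℝ)⁻¹ ^ (k+1)) ^ (-(n:ℝ)))
            ∂volume := setLIntegral_mono' (measurableSet_closedBall.diff measurableSet_ball) hbd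
      _ = ENNReal.ofReal (((2:ℝ)⁻¹ ^ k) ^ (u + n) * ((2:ℝ)⁻¹ ^ (k+1)) ^ (-(n:ℝ))) *
            volume (A k) := by rw [setLIntegral_const]
      _ ≤ ENNReal.ofReal (((2:ℝ)⁻¹ ^ k) ^ (u + n) * ((2:ℝ)⁻¹ ^ (k+1)) ^ (-(n:ℝ))) *
            (ENNReal.ofReal (((2:ℝ)⁻¹ ^ k) ^ (n:ℕ)) * volume (ball (0:E) 1)) := by
          gcongr
          exact (measure_mono diff_subset).trans
            (le_of_eq (by rw [Measure.addHaar_closedBall _ _ (by positivity),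
              finrank_euclideanSpace, Fintype.card_fin]))
      _ = ENNReal.ofReal ((2:ℝ) ^ (n:ℝ)) * volume (ball (0:E) 1) *
            (ENNReal.ofReal ((2:ℝ) ^ (-(u + n)))) ^ k := by
          have inv2 : ∀ j : ℕ, ((2:ℝ)⁻¹) ^ j = (2:ℝ) ^ (-(j:ℝ)) := by
            intro j
            rw [← Real.rpow_natCast (2:ℝ)⁻¹ j, ← Real.rpow_neg_one (2:ℝ),
              ← Real.rpow_mul (by norm_num)]
            norm_num
          have hreal : ((2⁻¹:ℝ) ^ k) ^ (u + n) * ((2⁻¹:ℝ) ^ (k+1)) ^ (-(n:ℝ)) *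
              ((2⁻¹:ℝ) ^ k) ^ (n:ℕ) = (2:ℝ) ^ (n:ℝ) * ((2:ℝ) ^ (-(u + n))) ^ k := by
            rw [inv2 k, inv2 (k+1), ← Real.rpow_natCast ((2:ℝ) ^ (-(k:ℝ))) n,
              ← Real.rpow_natCast ((2:ℝ) ^ (-(u+n))) k,
              ← Real.rpow_mul (by norm_num), ← Real.rpow_mul (by norm_num),
              ← Real.rpow_mul (by norm_num), ← Real.rpow_mul (by norm_num),
              ← Real.rpow_add (by norm_num), ← Real.rpow_add (by norm_num),
              ← Real.rpow_add (by norm_num)]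
            congr 1
            push_cast
            ring
          rw [← mul_assoc, ← ENNReal.ofReal_mul (by positivity), hreal,
            ENNReal.ofReal_mul (by positivity), ENNReal.ofReal_pow (by positivity)]
          ring
  have hρ : ENNReal.ofReal ((2:ℝ) ^ (-(u + n))) < 1 := by
    rw [← ENNReal.ofReal_one]
    exact ENNReal.ofReal_lt_ofReal_iff_of_nonneg (by positivity) |>.2
      (Real.rpow_lt_one_of_one_lt_of_neg (by norm_num) (by linarith))
  calc ∫⁻ x in ball (0:E) 1, ENNReal.ofReal (‖x‖ ^ u) ∂volume
      = ∫⁻ x in ball (0:E) 1 \ {0}, ENNReal.ofReal (‖x‖ ^ u) ∂volume := by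
        refine (setLIntegral_congr ?_).symm
        exact diff_ae_eq_self.2 (measure_mono_null inter_subset_right (measure_singleton 0))
    _ ≤ ∫⁻ x in ⋃ k, A k, ENNReal.ofReal (‖x‖ ^ u) ∂volume := lintegral_mono_set hsub
    _ ≤ ∑' k, ∫⁻ x in A k, ENNReal.ofReal (‖x‖ ^ u) ∂volume := lintegral_iUnion_le _ _
    _ ≤ ∑' k, ENNReal.ofReal ((2:ℝ) ^ (n:ℝ)) * volume (ball (0:E) 1) *
          (ENNReal.ofReal ((2:ℝ) ^ (-(u + n)))) ^ k := ENNReal.tsum_le_tsum key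
    _ = ENNReal.ofReal ((2:ℝ) ^ (n:ℝ)) * volume (ball (0:E) 1) *
          (1 - ENNReal.ofReal ((2:ℝ) ^ (-(u + n))))⁻¹ := by
        rw [ENNReal.tsum_mul_left, ENNReal.tsum_geometric]
    _ < ⊤ := by
        apply ENNReal.mul_lt_top (ENNReal.mul_lt_top ENNReal.ofReal_lt_top measure_ball_lt_top)
        exact ENNReal.inv_lt_top.2 (tsub_pos_iff_lt.2 hρ)

lemma integrableOn_rpow_ball (n : ℕ) (hn : 0 < n) {u : ℝ} (hu : -(n:ℝ) < u) {R : ℝ}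
    (hR1 : R ≤ 1) :
    IntegrableOn (fun x : EuclideanSpace ℝ (Fin n) => ‖x‖ ^ u) (ball 0 R) volume := by
  have h1 : IntegrableOn (fun x : EuclideanSpace ℝ (Fin n) => ‖x‖ ^ u) (ball 0 1) volume := by
    constructor
    · exact (measurable_norm.pow_const _ |>.aemeasurable.aestronglyMeasurable).congr
        (Filter.EventuallyEq.rfl)
    · rw [hasFiniteIntegral_iff_ofReal (Filter.Eventually.of_forall fun x => by positivity)]
      exact finite_lint n hn hu
  exact h1.mono_set (Metric.ball_subset_ball hR1)

lemma integral_rpow_ball (n : ℕ) (hn : 0 < n) {u : ℝ} (hu : -(n:ℝ) < u) {R : ℝ}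
    (hR0 : 0 < R) (hR1 : R ≤ 1) :
    ∫ x in ball (0:EuclideanSpace ℝ (Fin n)) R, ‖x‖ ^ u ∂volume
      = n * bvol n * (R ^ (u + n) / (u + n)) := by
  haveI : Nontrivial (EuclideanSpace ℝ (Fin n)) :=
    Module.nontrivial_of_finrank_pos (R := ℝ)
      (by rw [finrank_euclideanSpace, Fintype.card_fin]; exact hn)
  set E := EuclideanSpace ℝ (Fin n)
  set g : ℝ → ℝ := (Ioo (0:ℝ) R).indicator (fun r => r ^ u) with hg
  have hfr : Module.finrank ℝ E = n := by rw [finrank_euclideanSpace, Fintype.card_fin]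
  have hcomp : (fun x : E => g ‖x‖)
      = (ball (0:E) R \ {0}).indicator (fun x => ‖x‖ ^ u) := by
    funext x
    by_cases hx : ‖x‖ ∈ Ioo (0:ℝ) R
    · have hx' : x ∈ ball (0:E) R \ {0} := by
        constructor
        · simpa [mem_ball, dist_zero_right] using hx.2
        · simp only [mem_singleton_iff]
          intro h; rw [h] at hx; simp at hx
      simp [g, Set.indicator_of_mem, hx, hx']
    · have hx' : x ∉ ball (0:E) R \ {0} := by
        intro h
        apply hx
        refine ⟨norm_pos_iff.2 ?_, by simpa [mem_ball, dist_zero_right] using h.1⟩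
        simpa using h.2
      simp [g, Set.indicator_of_notMem, hx, hx']
  have lhs : ∫ x : E, g ‖x‖ ∂volume = ∫ x in ball (0:E) R, ‖x‖ ^ u ∂volume := by
    rw [hcomp, integral_indicator (measurableSet_ball.diff (measurableSet_singleton 0))]
    refine setIntegral_congr_set ?_
    exact diff_ae_eq_self.2 (measure_mono_null inter_subset_right (measure_singleton 0))
  have rhs : ∫ y in Ioi (0:ℝ), y ^ (Module.finrank ℝ E - 1) • g y = R ^ (u + n) / (u + n) := by
    have hind : ∀ y : ℝ, y ^ (Module.finrank ℝ E - 1) • g y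
        = (Ioo (0:ℝ) R).indicator (fun r => r ^ (Module.finrank ℝ E - 1) * r ^ u) y := by
      intro y
      by_cases hy : y ∈ Ioo (0:ℝ) R
      · simp [g, Set.indicator_of_mem hy, smul_eq_mul]
      · simp [g, Set.indicator_of_notMem hy]
    rw [funext hind]  -- maybe need simp_rw
    rw [setIntegral_indicator measurableSet_Ioo]
    have hset : Ioi (0:ℝ) ∩ Ioo 0 R = Ioo 0 R := by
      ext y; simp only [mem_inter_iff, mem_Ioi, mem_Ioo]; tauto
    rw [hset]
    have hcong : ∀ y ∈ Ioo (0:ℝ) R,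
        y ^ (Module.finrank ℝ E - 1) * y ^ u = y ^ (u + n - 1) := by
      intro y hy
      rw [hfr, ← Real.rpow_natCast y (n-1), ← Real.rpow_add hy.1]
      congr 1
      have : ((n - 1 : ℕ) : ℝ) = (n : ℝ) - 1 := by
        have := Nat.cast_sub (hn : 1 ≤ n) (R := ℝ); simpa using this
      rw [this]; ring
    rw [setIntegral_congr_fun measurableSet_Ioo hcong]
    rw [← integral_Ioc_eq_integral_Ioo, ← intervalIntegral.integral_of_le hR0.le]
    rw [integral_rpow (Or.inl (by linarith))]
    rw [Real.zero_rpow (by linarith : u + (n:ℝ) - 1 + 1 ≠ 0)]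
    ring_nf
  have main := integral_fun_norm_addHaar (volume : Measure E) g
  rw [lhs, rhs, hfr] at main
  rw [main, nsmul_eq_mul, smul_eq_mul, bvol, measureReal_def]
  ring

lemma lintegral_rpow_ball (n : ℕ) (hn : 0 < n) {u : ℝ} (hu : -(n:ℝ) < u) {R : ℝ}
    (hR0 : 0 < R) (hR1 : R ≤ 1) :
    ∫⁻ x in ball (0:EuclideanSpace ℝ (Fin n)) R, ENNReal.ofReal (‖x‖ ^ u) ∂volume
      = ENNReal.ofReal (n * bvol n * (R ^ (u + n) / (u + n))) := by
  rw [← ofReal_integral_eq_lintegral_ofReal (integrableOn_rpow_ball n hn hu hR1)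
    (Filter.Eventually.of_forall fun x => by positivity),
    integral_rpow_ball n hn hu hR0 hR1]

lemma four_lower (n : ℕ) (hn : 0 < n) {s : ℝ} (hs : 0 < s) (hsn : -(n:ℝ) < s - n)
    {y : EuclideanSpace ℝ (Fin n)} (hy : ‖y‖ ≤ 1/2) :
    ((2 * Real.pi) ^ (-(n:ℝ)/2) : ℝ) * (n * bvol n / (2*s))
      ≤ ‖Four n (fun x => (ball (0:EuclideanSpace ℝ (Fin n)) 1).indicator
          (fun x => ((‖x‖ ^ (s - (n:ℝ)) : ℝ) : ℂ)) x) y‖ := by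
  have hE : (0:ℝ) < n := Nat.cast_pos.mpr hn
  set fE : EuclideanSpace ℝ (Fin n) → ℂ := fun x => (ball (0:EuclideanSpace ℝ (Fin n)) 1).indicator
    (fun x => ((‖x‖ ^ (s - (n:ℝ)) : ℝ) : ℂ)) x with hfE
  set G : EuclideanSpace ℝ (Fin n) → ℂ := fun x => Complex.exp (Complex.I * ((inner ℝ x y : ℝ) : ℂ)) • fE x with hG
  have hnormG : ∀ x, ‖G x‖ = (ball (0:EuclideanSpace ℝ (Fin n)) 1).indicator (fun x => ‖x‖ ^ (s - (n:ℝ))) x := by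
    intro x
    have hexp : ‖Complex.exp (Complex.I * ((inner ℝ x y : ℝ) : ℂ))‖ = 1 := by
      rw [mul_comm]; exact Complex.norm_exp_ofReal_mul_I _
    simp only [hG, smul_eq_mul, norm_mul, hexp, one_mul, hfE]
    by_cases hx : x ∈ ball (0:EuclideanSpace ℝ (Fin n)) 1
    · simp only [Set.indicator_of_mem hx, Complex.norm_real, Real.norm_eq_abs,
        _root_.abs_of_nonneg (Real.rpow_nonneg (norm_nonneg x) _)]
    · simp [Set.indicator_of_notMem hx]
  have hmeas : Measurable fE := by
    apply Measurable.indicator _ measurableSet_ball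
    exact Complex.measurable_ofReal.comp (measurable_norm.pow_const _)
  have hcont : Continuous fun x : EuclideanSpace ℝ (Fin n) => ((inner ℝ x y : ℝ) : ℂ) :=
    Complex.continuous_ofReal.comp
      (continuous_inner.comp (continuous_id.prodMk continuous_const))
  have hmeasG : Measurable G := by
    refine Measurable.smul (f := fun x => Complex.exp (Complex.I * ((inner ℝ x y : ℝ) : ℂ))) (g := fE) ?_ ?_
    · exact (Complex.continuous_exp.comp (continuous_const.mul hcont)).measurable
    · exact hmeas
  have hIOn : IntegrableOn (fun x : EuclideanSpace ℝ (Fin n) => ‖x‖ ^ (s - (n:ℝ))) (ball 0 1) volume :=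
    integrableOn_rpow_ball n hn hsn le_rfl
  have hIndInt : Integrable ((ball (0:EuclideanSpace ℝ (Fin n)) 1).indicator (fun x => ‖x‖ ^ (s - (n:ℝ)))) volume :=
    (integrable_indicator_iff measurableSet_ball).2 hIOn
  have hint : Integrable G volume := by
    refine Integrable.mono' hIndInt hmeasG.aestronglyMeasurable ?_
    exact Filter.Eventually.of_forall fun x => le_of_eq (hnormG x)
  have hre : ∀ x, (1/2 : ℝ) * (ball (0:EuclideanSpace ℝ (Fin n)) 1).indicator (fun x => ‖x‖ ^ (s - (n:ℝ))) x
      ≤ (G x).re := by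
    intro x
    by_cases hx : x ∈ ball (0:EuclideanSpace ℝ (Fin n)) 1
    · have hθ : |(inner ℝ x y : ℝ)| ≤ 1/2 := by
        refine (abs_real_inner_le_norm x y).trans ?_
        have hx1 : ‖x‖ ≤ 1 := le_of_lt (by simpa [mem_ball, dist_zero_right] using hx)
        calc ‖x‖ * ‖y‖ ≤ 1 * (1/2) := by
              apply mul_le_mul hx1 hy (norm_nonneg y) one_pos.le
          _ = 1/2 := by norm_num
      have hcos : (1/2 : ℝ) ≤ Real.cos ((inner ℝ x y : ℝ)) := by
        have h1 : ((inner ℝ x y : ℝ))^2 ≤ (1/2)^2 := by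
          rw [← _root_.sq_abs]
          exact pow_le_pow_left₀ (abs_nonneg _) hθ 2
        nlinarith [Real.one_sub_sq_div_two_le_cos (x := (inner ℝ x y : ℝ))]
      have hGre : (G x).re = Real.cos ((inner ℝ x y : ℝ)) * ‖x‖ ^ (s - (n:ℝ)) := by
        have hfx : fE x = ((‖x‖ ^ (s - (n:ℝ)) : ℝ) : ℂ) := by
          simp only [hfE]; exact Set.indicator_of_mem hx _
        have hGx : G x = Complex.exp (((inner ℝ x y : ℝ) : ℂ) * Complex.I)
            * ((‖x‖ ^ (s - (n:ℝ)) : ℝ) : ℂ) := by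
          simp only [hG, smul_eq_mul, hfx, mul_comm Complex.I]
        rw [hGx, Complex.mul_re, Complex.exp_ofReal_mul_I_re, Complex.ofReal_re,
          Complex.ofReal_im, mul_zero, sub_zero]
      rw [hGre, Set.indicator_of_mem hx]
      have : 0 ≤ ‖x‖ ^ (s - (n:ℝ)) := Real.rpow_nonneg (norm_nonneg x) _
      nlinarith
    · simp only [Set.indicator_of_notMem hx, mul_zero]
      have hfx : fE x = 0 := by
        simp only [hfE]; exact Set.indicator_of_notMem hx _
      simp [hG, hfx]
  have hint2 : Integrable (fun x : EuclideanSpace ℝ (Fin n) =>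
      (1/2 : ℝ) * (ball (0:EuclideanSpace ℝ (Fin n)) 1).indicator (fun x => ‖x‖ ^ (s - (n:ℝ))) x) volume :=
    hIndInt.const_mul _
  have hmono : ∫ x, (1/2 : ℝ) * (ball (0:EuclideanSpace ℝ (Fin n)) 1).indicator (fun x => ‖x‖ ^ (s - (n:ℝ))) x ∂volume
      ≤ ∫ x, (G x).re ∂volume :=
    integral_mono hint2 hint.re hre
  have hval : ∫ x, (1/2 : ℝ) * (ball (0:EuclideanSpace ℝ (Fin n)) 1).indicator (fun x => ‖x‖ ^ (s - (n:ℝ))) x ∂volume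
      = n * bvol n / (2*s) := by
    rw [integral_const_mul, integral_indicator measurableSet_ball,
      integral_rpow_ball n hn hsn one_pos le_rfl]
    rw [sub_add_cancel, Real.one_rpow]
    ring
  have hre_int : ∫ x, (G x).re ∂volume = (∫ x, G x ∂volume).re := by
    simpa using integral_re (𝕜 := ℂ) hint
  have hre_le : n * bvol n / (2*s) ≤ ‖∫ x, G x ∂volume‖ := by
    rw [← hval]
    refine hmono.trans ?_
    rw [hre_int]
    exact Complex.re_le_norm _
  have : ‖Four n fE y‖ = ((2 * Real.pi) ^ (-(n:ℝ)/2) : ℝ) * ‖∫ x, G x ∂volume‖ := by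
    rw [Four, norm_smul, Real.norm_eq_abs, abs_of_pos (by positivity)]
  rw [hfE] at this
  rw [this]
  have hc : (0:ℝ) < (2 * Real.pi) ^ (-(n:ℝ)/2) := by positivity
  exact mul_le_mul_of_nonneg_left hre_le hc.le

noncomputable def pittC (n : ℕ) (a : ℝ) : ℝ :=
  (2 * Real.pi) ^ (-(n:ℝ)/2) * a * min 1 a * ((1:ℝ)/2) ^ (n:ℝ) * (Real.exp 1)⁻¹ /
    (4 * max 1 a * (n:ℝ)^3)

lemma pittC_pos (n : ℕ) (hn : 0 < n) {a : ℝ} (ha : 0 < a) : 0 < pittC n a := by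
  have h1 : (0:ℝ) < min 1 a := lt_min one_pos ha
  have h2 : (0:ℝ) < max 1 a := lt_of_lt_of_le one_pos (le_max_left _ _)
  have h3 : (0:ℝ) < (n:ℝ) := Nat.cast_pos.mpr hn
  have h4 : (0:ℝ) < (2 * Real.pi) ^ (-(n:ℝ)/2) := Real.rpow_pos_of_pos (by positivity) _
  have h5 : (0:ℝ) < ((1:ℝ)/2) ^ (n:ℝ) := Real.rpow_pos_of_pos (by norm_num) _
  rw [pittC]
  positivity

lemma key_ineq (n : ℕ) (hn : 0 < n) (α β t p q a : ℝ)
    (ha : 0 < a) (hα : 0 < α) (hβ0 : 0 ≤ β) (hβ1 : β < 1) (hαβ : α + β ≤ 1)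
    (ht : 0 < t) (ht' : t < (n:ℝ) - β) (hp1 : 1 ≤ p) (hq1 : 1 ≤ q)
    (hq_eq : 1/q = (α + t)/n) (hp_eq : 1/p = ((n:ℝ) - β - t)/n) :
    pittC n a * (((n:ℝ)-β)/t)^((α+β)/n) * (a/(t*p))^(1/p)
      ≤ ((2 * Real.pi) ^ (-(n:ℝ)/2) * a/(4*t)) * (a * ((1:ℝ)/2)^(q*t) / (q*t))^(1/q) := by
  have hn1 : (1:ℝ) ≤ n := by exact_mod_cast hn
  have hn0 : (0:ℝ) < n := by linarith
  have hq0 : (0:ℝ) < q := by linarith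
  have hp0 : (0:ℝ) < p := by linarith
  have htn : t ≤ (n:ℝ) := by linarith
  have hcn : (0:ℝ) < (2 * Real.pi) ^ (-(n:ℝ)/2) := Real.rpow_pos_of_pos (by positivity) _
  set cn := (2 * Real.pi) ^ (-(n:ℝ)/2) with hcndef
  set γ := (α+β)/n with hγdef
  have hγ0 : 0 ≤ γ := by positivity
  have hγ1 : γ ≤ 1 := by
    rw [hγdef, div_le_one hn0]; linarith
  have hmin : (0:ℝ) < min 1 a := lt_min one_pos ha
  have hmax : (0:ℝ) < max 1 a := lt_of_lt_of_le one_pos (le_max_left _ _)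
  have hhalf : (0:ℝ) < ((1:ℝ)/2) ^ (n:ℝ) := Real.rpow_pos_of_pos (by norm_num) _
  -- Step 1 : denominator bound
  have step1 : (a/(t*p))^(1/p) ≤ max 1 a * t^(-(1/p)) := by
    have e1 : (a/(t*p))^(1/p) = a^(1/p) * (t^(1/p))⁻¹ * (p^(1/p))⁻¹ := by
      rw [div_eq_mul_inv, Real.mul_rpow ha.le (by positivity), Real.inv_rpow (by positivity),
        Real.mul_rpow ht.le hp0.le, mul_inv, mul_assoc]
    have b1 : a^(1/p) ≤ max 1 a := by
      rcases le_total a 1 with h | h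
      · exact le_trans (Real.rpow_le_one ha.le h (by positivity)) (le_max_left _ _)
      · have h2 := Real.rpow_le_rpow_of_exponent_le h
          (show 1/p ≤ 1 by rw [div_le_one hp0]; exact hp1)
        rw [Real.rpow_one] at h2
        exact h2.trans (le_max_right _ _)
    have b2 : (p^(1/p))⁻¹ ≤ 1 := by
      rw [inv_le_one_iff₀]
      right
      calc (1:ℝ) = p ^ (0:ℝ) := (Real.rpow_zero p).symm
        _ ≤ p ^ (1/p) := Real.rpow_le_rpow_of_exponent_le hp1 (by positivity)
    rw [e1]
    calc a^(1/p) * (t^(1/p))⁻¹ * (p^(1/p))⁻¹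
        ≤ max 1 a * (t^(1/p))⁻¹ * 1 := by
          apply mul_le_mul (mul_le_mul b1 le_rfl (by positivity) hmax.le) b2 (by positivity)
            (by positivity)
      _ = max 1 a * t^(-(1/p)) := by rw [mul_one, Real.rpow_neg ht.le]
  -- Step 2 : numerator weight bound
  have hqt : (0:ℝ) < q * t := by positivity
  have step2 : min 1 a * ((1:ℝ)/2)^(n:ℝ) * (Real.exp 1)⁻¹ * t^(-(1/q))
      ≤ (a * ((1:ℝ)/2)^(q*t) / (q*t))^(1/q) := by
    have hexp : q*t*(1/q) = t := by field_simp
    have e2 : (a * ((1:ℝ)/2)^(q*t) / (q*t))^(1/q)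
        = a^(1/q) * ((1:ℝ)/2)^t * (q^(1/q))⁻¹ * (t^(1/q))⁻¹ := by
      rw [div_eq_mul_inv, Real.mul_rpow (by positivity) (by positivity),
        Real.mul_rpow ha.le (by positivity), ← Real.rpow_mul (by norm_num : (0:ℝ) ≤ 1/2),
        hexp, Real.inv_rpow hqt.le, Real.mul_rpow hq0.le ht.le, mul_inv, ← mul_assoc]
    have b3 : min 1 a ≤ a^(1/q) := by
      rcases le_total a 1 with h | h
      · have h2 := Real.rpow_le_rpow_of_exponent_ge ha h
          (show 1/q ≤ 1 by rw [div_le_one hq0]; exact hq1)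
        rw [Real.rpow_one] at h2
        exact le_trans (min_le_right _ _) h2
      · calc min 1 a ≤ 1 := min_le_left _ _
          _ = (1:ℝ)^(1/q) := (Real.one_rpow _).symm
          _ ≤ a^(1/q) := Real.rpow_le_rpow (by norm_num) h (by positivity)
    have b4 : ((1:ℝ)/2)^(n:ℝ) ≤ ((1:ℝ)/2)^t :=
      Real.rpow_le_rpow_of_exponent_ge (by norm_num) (by norm_num) htn
    have b5 : (Real.exp 1)⁻¹ ≤ (q^(1/q))⁻¹ := by
      apply inv_anti₀ (by positivity)
      rw [Real.rpow_def_of_pos hq0, ← Real.exp_one_rpow 1, Real.exp_one_rpow,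
        Real.exp_le_exp]
      calc Real.log q * (1/q) ≤ q * (1/q) := by
            apply mul_le_mul_of_nonneg_right _ (by positivity)
            linarith [Real.log_le_sub_one_of_pos hq0]
        _ = 1 := by field_simp
    rw [e2, Real.rpow_neg ht.le]
    have h1 : (0:ℝ) ≤ a^(1/q) := by positivity
    have h2 : (0:ℝ) ≤ ((1:ℝ)/2)^t := by positivity
    have h3 : (0:ℝ) ≤ (q^(1/q))⁻¹ := by positivity
    have h4 : (0:ℝ) ≤ (t^(1/q))⁻¹ := by positivity
    apply mul_le_mul _ le_rfl (by positivity) (by positivity)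
    apply mul_le_mul _ b5 (by positivity) (by positivity)
    exact mul_le_mul b3 b4 hhalf.le h1
  -- Step 3 : exponent identity
  have step3 : -(1:ℝ) - 1/q + γ + 1/p = -(2*t)/n := by
    rw [hq_eq, hp_eq, hγdef]
    field_simp
    ring
  -- Step 4 : t-power lower bound
  have step4 : (n:ℝ)^(-(2:ℝ)) ≤ t^(-(2*t)/n) := by
    rcases le_total t 1 with h | h
    · have h1 : t^(-(2*t)/n) ≥ t^(0:ℝ) := by
        apply Real.rpow_le_rpow_of_exponent_ge ht h
        apply div_nonpos_of_nonpos_of_nonneg (by linarith) hn0.le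
      rw [Real.rpow_zero] at h1
      refine le_trans ?_ h1
      exact Real.rpow_le_one_of_one_le_of_nonpos hn1 (by norm_num)
    · rw [Real.rpow_def_of_pos hn0, Real.rpow_def_of_pos ht, Real.exp_le_exp]
      have hlt : Real.log t ≤ Real.log n := Real.log_le_log ht htn
      have hlt0 : 0 ≤ Real.log t := Real.log_nonneg h
      have hln0 : 0 ≤ Real.log n := Real.log_nonneg hn1
      rw [div_eq_mul_inv, mul_comm (Real.log t)]
      have h2t : -(2*t) * (n:ℝ)⁻¹ = -((2*t)/n) := by ring
      rw [h2t]
      have : (2*t)/n ≤ 2 := by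
        rw [div_le_iff₀ hn0]; linarith
      nlinarith [mul_le_mul this hlt hlt0 (by norm_num : (0:ℝ) ≤ 2)]
  -- Step 5
  have step5 : ((n:ℝ)-β)^γ ≤ n := by
    rcases le_total ((n:ℝ)-β) 1 with h | h
    · exact le_trans (Real.rpow_le_one (by linarith) h hγ0) hn1
    · have h2 := Real.rpow_le_rpow_of_exponent_le h hγ1
      rw [Real.rpow_one] at h2
      exact h2.trans (by linarith)
  -- Assembly
  have hsplit : (((n:ℝ)-β)/t)^γ = ((n:ℝ)-β)^γ * t^(-γ) := by
    rw [div_eq_mul_inv, Real.mul_rpow (by linarith) (by positivity),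
      ← Real.rpow_neg_one t, ← Real.rpow_mul ht.le]
    ring_nf
  have hKdef : pittC n a * (n:ℝ) * max 1 a
      = cn * a * min 1 a * ((1:ℝ)/2)^(n:ℝ) * (Real.exp 1)⁻¹ / 4 * ((n:ℝ)^2)⁻¹ := by
    rw [pittC, ← hcndef]
    field_simp
  have hC0 : 0 < pittC n a := pittC_pos n hn ha
  calc pittC n a * (((n:ℝ)-β)/t)^γ * (a/(t*p))^(1/p)
      ≤ pittC n a * (((n:ℝ)-β)^γ * t^(-γ)) * (max 1 a * t^(-(1/p))) := by
        rw [hsplit]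
        exact mul_le_mul_of_nonneg_left step1 (mul_nonneg hC0.le
          (mul_nonneg (Real.rpow_nonneg (by linarith) _) (Real.rpow_nonneg ht.le _)))
    _ = (pittC n a * ((n:ℝ)-β)^γ * max 1 a) * (t^(-γ) * t^(-(1/p))) := by ring
    _ ≤ (pittC n a * (n:ℝ) * max 1 a) * (t^(-γ) * t^(-(1/p))) := by
        apply mul_le_mul_of_nonneg_right _
          (mul_nonneg (Real.rpow_nonneg ht.le _) (Real.rpow_nonneg ht.le _))
        apply mul_le_mul_of_nonneg_right _ hmax.le
        exact mul_le_mul_of_nonneg_left step5 hC0.le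
    _ = (cn * a * min 1 a * ((1:ℝ)/2)^(n:ℝ) * (Real.exp 1)⁻¹ / 4) * (n:ℝ)^(-(2:ℝ))
          * (t^(-γ) * t^(-(1/p))) := by
        rw [hKdef]
        congr 2
        rw [show (-(2:ℝ)) = -((2:ℕ):ℝ) by norm_num, Real.rpow_neg hn0.le,
          Real.rpow_natCast]
    _ ≤ (cn * a * min 1 a * ((1:ℝ)/2)^(n:ℝ) * (Real.exp 1)⁻¹ / 4) * t^(-(2*t)/n)
          * (t^(-γ) * t^(-(1/p))) := by
        apply mul_le_mul_of_nonneg_right _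
          (mul_nonneg (Real.rpow_nonneg ht.le _) (Real.rpow_nonneg ht.le _))
        exact mul_le_mul_of_nonneg_left step4 (by positivity)
    _ = (cn * a/(4*t)) * (min 1 a * ((1:ℝ)/2)^(n:ℝ) * (Real.exp 1)⁻¹ * t^(-(1/q))) := by
        have hcollapse : t^(-(2*t)/(n:ℝ)) * (t^(-γ) * t^(-(1/p)))
            = t^(-1:ℝ) * t^(-(1/q)) := by
          rw [← Real.rpow_add ht (-γ) (-(1/p)), ← Real.rpow_add ht,
            ← Real.rpow_add ht (-1) (-(1/q))]
          congr 1
          linarith [step3]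
        calc cn * a * min 1 a * ((1:ℝ)/2)^(n:ℝ) * (Real.exp 1)⁻¹ / 4 * t^(-(2*t)/(n:ℝ))
              * (t^(-γ) * t^(-(1/p)))
            = cn * a * min 1 a * ((1:ℝ)/2)^(n:ℝ) * (Real.exp 1)⁻¹ / 4
              * (t^(-(2*t)/(n:ℝ)) * (t^(-γ) * t^(-(1/p)))) := by ring
          _ = cn * a * min 1 a * ((1:ℝ)/2)^(n:ℝ) * (Real.exp 1)⁻¹ / 4
              * (t^(-1:ℝ) * t^(-(1/q))) := by rw [hcollapse]
          _ = (cn * a/(4*t)) * (min 1 a * ((1:ℝ)/2)^(n:ℝ) * (Real.exp 1)⁻¹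
              * t^(-(1/q))) := by
            rw [Real.rpow_neg_one]
            field_simp
    _ ≤ (cn * a/(4*t)) * (a * ((1:ℝ)/2)^(q*t) / (q*t))^(1/q) := by
        exact mul_le_mul_of_nonneg_left step2 (by positivity)

theorem stmt10 (n : ℕ) (hn : 0 < n) (α β : ℝ)
    (hα0 : 0 ≤ α) (hα1 : α < 1) (hβ0 : 0 ≤ β) (hβ1 : β < 1) (hαβ : α + β ≤ 1) :
    ∃ C > (0:ℝ), ∀ p q : ℝ, n / (n - β) < p → 1 ≤ q → q < n / α →
      β - α = n - n * (1/p + 1/q) →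
      ENNReal.ofReal (C * (p / (p - n / (n - β))) ^ ((α + β) / n))
        ≤ ⨆ f : {f : EuclideanSpace ℝ (Fin n) → ℂ // Measurable f},
            eLpNorm (fun y : EuclideanSpace ℝ (Fin n) => ‖y‖ ^ (-α) * ‖Four n f.1 y‖)
                (ENNReal.ofReal q) volume /
              eLpNorm (fun x : EuclideanSpace ℝ (Fin n) => ‖x‖ ^ β * ‖f.1 x‖)
                (ENNReal.ofReal p) volume := by

  haveI : Nontrivial (EuclideanSpace ℝ (Fin n)) :=
    Module.nontrivial_of_finrank_pos (R := ℝ)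
      (by rw [finrank_euclideanSpace, Fintype.card_fin]; exact hn)
  have hnR : (1:ℝ) ≤ n := by exact_mod_cast hn
  have hn0 : (0:ℝ) < n := by linarith
  have hnb : (0:ℝ) < n - β := by linarith
  have hbv := bvol_pos n
  set a : ℝ := n * bvol n with hadef
  have ha : 0 < a := by positivity
  refine ⟨pittC n a, pittC_pos n hn ha, ?_⟩
  intro p q hp hq1 hqn hPitt
  have hα : 0 < α := by
    rcases hα0.lt_or_eq with h | h
    · exact h
    · exfalso
      rw [← h] at hqn
      norm_num at hqn
      linarith
  have hp0n : (1:ℝ) ≤ n/(n-β) := by rw [le_div_iff₀ hnb]; linarith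
  have hp1 : 1 < p := lt_of_le_of_lt hp0n hp
  have hp0 : (0:ℝ) < p := by linarith
  have hq0 : (0:ℝ) < q := by linarith
  set t : ℝ := n - β - n/p with htdef
  have ht : 0 < t := by
    have h1 : (n:ℝ) < p*(n-β) := by
      have := (div_lt_iff₀ hnb).mp hp
      linarith
    have h2 : (n:ℝ)/p < n - β := by
      rw [div_lt_iff₀ hp0]
      nlinarith
    simp only [htdef]
    linarith
  have ht' : t < (n:ℝ) - β := by
    have : 0 < (n:ℝ)/p := by positivity
    simp only [htdef]
    linarith
  have hp_eq : 1/p = ((n:ℝ) - β - t)/n := by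
    simp only [htdef]
    field_simp
    ring
  have hnp : (n:ℝ)/p = n - β - t := by simp only [htdef]; ring
  have hq_eq : 1/q = (α + t)/n := by
    have h1 : (n:ℝ)*(1/p) + (n:ℝ)*(1/q) = n - β + α := by
      have h2 : (n:ℝ) * (1/p + 1/q) = n - β + α := by linarith
      linarith [mul_add (n:ℝ) (1/p) (1/q)]
    have h3 : (n:ℝ)*(1/p) = n - β - t := by
      rw [mul_one_div]; exact hnp
    have h4 : (n:ℝ)*(1/q) = α + t := by linarith
    rw [eq_div_iff (ne_of_gt hn0)]
    linarith [h4]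
  have hqt : q*t = n - α*q := by
    have h3 : q*(α+t) = n := by
      have h5 : 1/q * q = 1 := by field_simp
      have h6 : ((α+t)/n) * q = 1 := by rw [← hq_eq]; exact h5
      have h7 : (α+t) * q = n := by
        field_simp at h6
        linarith
      linarith [h7]
    nlinarith [h3]
  have hqtpos : (0:ℝ) < q*t := by positivity
  set s : ℝ := 2*t with hsdef
  have hs : 0 < s := by positivity
  set fE : EuclideanSpace ℝ (Fin n) → ℂ := fun x => (ball (0:EuclideanSpace ℝ (Fin n)) 1).indicator
    (fun x => ((‖x‖ ^ (s - (n:ℝ)) : ℝ) : ℂ)) x with hfEdef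
  have hfmeas : Measurable fE :=
    Measurable.indicator (Complex.measurable_ofReal.comp (measurable_norm.pow_const _))
      measurableSet_ball
  refine le_trans ?_ (le_iSup _ (⟨fE, hfmeas⟩ : {f : EuclideanSpace ℝ (Fin n) → ℂ // Measurable f}))
  have hae0 : ∀ᵐ x : EuclideanSpace ℝ (Fin n) ∂volume, x ≠ 0 := by
    rw [ae_iff]
    have : {x : EuclideanSpace ℝ (Fin n) | ¬ x ≠ 0} = {0} := by ext x; simp
    rw [this]
    exact measure_singleton 0
  have hup : (β + s - (n:ℝ))*p + n = t*p := by
    have hdm : (n:ℝ)/p*p = n := div_mul_cancel₀ _ (ne_of_gt hp0)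
    simp only [hsdef, htdef]
    nlinarith [hdm]
  have hu1 : -(n:ℝ) < (β + s - (n:ℝ))*p := by nlinarith [hup, hqtpos, ht, hp0]
  -- Denominator
  have hDen : eLpNorm (fun x : EuclideanSpace ℝ (Fin n) => ‖x‖ ^ β * ‖fE x‖)
      (ENNReal.ofReal p) volume = ENNReal.ofReal ((a/(t*p)) ^ (1/p)) := by
    rw [eLpNorm_eq_lintegral_rpow_enorm_toReal (by simp [ENNReal.ofReal_eq_zero]; linarith)
      ENNReal.ofReal_ne_top, ENNReal.toReal_ofReal hp0.le]
    have hcongr : (fun x : EuclideanSpace ℝ (Fin n) =>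
          ‖‖x‖ ^ β * ‖fE x‖‖ₑ ^ p)
        =ᵐ[volume] (fun x => (ball (0:EuclideanSpace ℝ (Fin n)) 1).indicator
          (fun x => ENNReal.ofReal (‖x‖ ^ ((β + s - (n:ℝ))*p))) x) := by
      filter_upwards [hae0] with x hx0
      have hxn : (0:ℝ) < ‖x‖ := norm_pos_iff.2 hx0
      by_cases hx : x ∈ ball (0:EuclideanSpace ℝ (Fin n)) 1
      · have hfx : ‖fE x‖ = ‖x‖ ^ (s - (n:ℝ)) := by
          simp only [hfEdef, Set.indicator_of_mem hx, Complex.norm_real, Real.norm_eq_abs]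
          exact _root_.abs_of_nonneg (Real.rpow_nonneg (norm_nonneg x) _)
        rw [hfx, Set.indicator_of_mem hx, ← Real.rpow_add hxn,
          Real.enorm_eq_ofReal (by positivity),
          ENNReal.ofReal_rpow_of_nonneg (by positivity) hp0.le,
          ← Real.rpow_mul (norm_nonneg x)]
        ring_nf
      · have hfx : fE x = 0 := by
          simp only [hfEdef]; exact Set.indicator_of_notMem hx _
        rw [hfx, Set.indicator_of_notMem hx]
        simp only [norm_zero, mul_zero]
        rw [Real.enorm_eq_ofReal le_rfl, ENNReal.ofReal_zero,
          ENNReal.zero_rpow_of_pos hp0]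
    rw [lintegral_congr_ae hcongr, lintegral_indicator measurableSet_ball,
      lintegral_rpow_ball n hn hu1 one_pos le_rfl, hup, Real.one_rpow,
      ENNReal.ofReal_rpow_of_nonneg (by positivity) (by positivity)]
    congr 1
    rw [← hadef]
    ring
  -- Numerator
  set cnv : ℝ := (2 * Real.pi) ^ (-(n:ℝ)/2) with hcnvdef
  have hcnv : 0 < cnv := Real.rpow_pos_of_pos (by positivity) _
  set M : ℝ := cnv * a/(4*t) with hMdef
  have hM0 : 0 ≤ M := by positivity
  have hu2 : -(n:ℝ) < -(α*q) := by nlinarith [hqtpos, hqt]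
  have hNum : ENNReal.ofReal (M * (a * ((1:ℝ)/2)^(q*t) / (q*t))^(1/q))
      ≤ eLpNorm (fun y : EuclideanSpace ℝ (Fin n) => ‖y‖ ^ (-α) * ‖Four n fE y‖)
        (ENNReal.ofReal q) volume := by
    rw [eLpNorm_eq_lintegral_rpow_enorm_toReal (by simp [ENNReal.ofReal_eq_zero]; linarith)
      ENNReal.ofReal_ne_top, ENNReal.toReal_ofReal hq0.le]
    have hlow : ∫⁻ y in ball (0:EuclideanSpace ℝ (Fin n)) (1/2),
        ENNReal.ofReal (M^q * ‖y‖ ^ (-(α*q))) ∂volume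
        ≤ ∫⁻ y : EuclideanSpace ℝ (Fin n),
            ‖‖y‖ ^ (-α) * ‖Four n fE y‖‖ₑ ^ q ∂volume := by
      refine le_trans (setLIntegral_mono' measurableSet_ball ?_)
        (setLIntegral_le_lintegral _ _)
      intro y hy
      have hy2 : ‖y‖ ≤ 1/2 := le_of_lt (by simpa [mem_ball, dist_zero_right] using hy)
      have hfour : cnv * ((n:ℕ) * bvol n / (2*s)) ≤ ‖Four n fE y‖ :=
        four_lower n hn hs (by linarith) hy2
      have hfour' : M ≤ ‖Four n fE y‖ := by
        refine le_trans (le_of_eq ?_) hfour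
        rw [hMdef, hsdef, ← hadef]
        ring
      have hprod : M * ‖y‖ ^ (-α) ≤ ‖y‖ ^ (-α) * ‖Four n fE y‖ := by
        rw [mul_comm]
        exact mul_le_mul_of_nonneg_left hfour' (Real.rpow_nonneg (norm_nonneg y) _)
      have heq : M^q * ‖y‖ ^ (-(α*q)) = (M * ‖y‖ ^ (-α))^q := by
        rw [Real.mul_rpow hM0 (Real.rpow_nonneg (norm_nonneg y) _),
          ← Real.rpow_mul (norm_nonneg y)]
        ring_nf
      rw [heq, Real.enorm_eq_ofReal (by positivity),
        ENNReal.ofReal_rpow_of_nonneg (by positivity) hq0.le]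
      apply ENNReal.ofReal_le_ofReal
      exact Real.rpow_le_rpow (by positivity) hprod hq0.le
    have hval : ∫⁻ y in ball (0:EuclideanSpace ℝ (Fin n)) (1/2),
        ENNReal.ofReal (M^q * ‖y‖ ^ (-(α*q))) ∂volume
        = ENNReal.ofReal (M^q * (a * ((1:ℝ)/2)^(q*t) / (q*t))) := by
      have : ∀ y : EuclideanSpace ℝ (Fin n), ENNReal.ofReal (M^q * ‖y‖ ^ (-(α*q)))
          = ENNReal.ofReal (M^q) * ENNReal.ofReal (‖y‖ ^ (-(α*q))) := fun y =>
        ENNReal.ofReal_mul (by positivity)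
      simp_rw [this]
      rw [lintegral_const_mul' _ _ ENNReal.ofReal_ne_top,
        lintegral_rpow_ball n hn hu2 (by norm_num) (by norm_num),
        ← ENNReal.ofReal_mul (by positivity)]
      congr 1
      have hex : -(α*q) + (n:ℝ) = q*t := by linarith [hqt]
      rw [hex, ← hadef]
      ring
    calc ENNReal.ofReal (M * (a * ((1:ℝ)/2)^(q*t) / (q*t))^(1/q))
        = (ENNReal.ofReal (M^q * (a * ((1:ℝ)/2)^(q*t) / (q*t)))) ^ (1/q) := by
          rw [ENNReal.ofReal_rpow_of_nonneg (by positivity) (by positivity)]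
          congr 1
          rw [Real.mul_rpow (by positivity) (by positivity),
            ← Real.rpow_mul hM0, mul_one_div_cancel (ne_of_gt hq0), Real.rpow_one]
      _ ≤ (∫⁻ y : EuclideanSpace ℝ (Fin n),
            ‖‖y‖ ^ (-α) * ‖Four n fE y‖‖ₑ ^ q ∂volume) ^ (1/q) := by
          apply ENNReal.rpow_le_rpow _ (by positivity)
          exact le_trans (le_of_eq hval.symm) hlow
  rw [hDen]
  refine le_trans ?_ (ENNReal.div_le_div hNum le_rfl)
  have hB0 : (0:ℝ) < (a/(t*p))^(1/p) := Real.rpow_pos_of_pos (by positivity) _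
  rw [← ENNReal.ofReal_div_of_pos hB0]
  apply ENNReal.ofReal_le_ofReal
  rw [le_div_iff₀ hB0]
  have hX : p/(p - (n:ℝ)/((n:ℝ)-β)) = ((n:ℝ)-β)/t := by
    have h1 : (0:ℝ) < p - n/(n-β) := by
      have := hp; linarith
    rw [div_eq_div_iff (ne_of_gt h1) (ne_of_gt ht)]
    simp only [htdef]
    field_simp
  rw [hX, hMdef, hcnvdef]
  exact key_ineq n hn α β t p q a ha hα hβ0 hβ1 hαβ ht ht' hp1.le hq1 hq_eq hp_eq
end
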